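/- Let S be a finite set with data as above (m_v·d_v = r, gcd(b_v,d_v) = 1, ∑ b_v/d_v ∈ ℤ). Then ∏_{v ∈ S} ∏_{1 ≤ i ≤ r−1, d_v ∤ i} (1 − q_v^i) = ∏_{v ∈ S} ∏_{1 ≤ i ≤ r−1, d_v ∤ i} (q_v^i − 1), where q_v ≥ 2 are integers attached to each v ∈ S. -/

import Mathlib

/-- With `m v * d v = r`, `gcd (b v) (d v) = 1` and `∑ b v / d v ∈ ℤ`,
`∏_{v ∈ S} ∏_{1 ≤ i ≤ r−1, d_v ∤ i} (1 − q_v^i)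
  = ∏_{v ∈ S} ∏_{1 ≤ i ≤ r−1, d_v ∤ i} (q_v^i − 1)` in `ℤ`. -/
theorem prod_one_sub_eq_prod_sub_one {V : Type*} (S : Finset V) (r : ℕ)
    (hr : 0 < r) (b d m : V → ℕ) (q : V → ℤ)
    (hq : ∀ v ∈ S, 2 ≤ q v)
    (hd : ∀ v ∈ S, 0 < d v) (hm : ∀ v ∈ S, 0 < m v)
    (hcop : ∀ v ∈ S, Nat.Coprime (b v) (d v))
    (hmd : ∀ v ∈ S, m v * d v = r)
    (hint : ∃ n : ℤ, (∑ v ∈ S, (b v : ℚ) / (d v)) = n) :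
    (∏ v ∈ S, ∏ i ∈ (Finset.Icc 1 (r - 1)).filter (fun i => ¬ d v ∣ i),
        (1 - q v ^ i)) =
      ∏ v ∈ S, ∏ i ∈ (Finset.Icc 1 (r - 1)).filter (fun i => ¬ d v ∣ i),
        (q v ^ i - 1) := by
  obtain ⟨n, hn⟩ := hint
  have hmr : ∀ v ∈ S, m v ≤ r := fun v hv =>
    Nat.le_of_dvd hr ⟨d v, (hmd v hv).symm⟩
  -- cardinality of the filtered set
  have hcard : ∀ v ∈ S,
      ((Finset.Icc 1 (r - 1)).filter (fun i => ¬ d v ∣ i)).card = r - m v := by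
    intro v hv
    have h1 : Finset.Icc 1 (r - 1) = Finset.Ioc 0 (r - 1) := by
      exact Finset.Icc_succ_left_eq_Ioc _ _
    have h2 : ((Finset.Ioc 0 (r - 1)).filter (fun i => d v ∣ i)).card = (r - 1) / d v :=
      Nat.Ioc_filter_dvd_card_eq_div (r - 1) (d v)
    have hdiv : (r - 1) / d v = m v - 1 := by
      have hdv := hd v hv
      have hmv := hm v hv
      have h5 := hmd v hv
      have : r - 1 = (d v - 1) + (m v - 1) * d v := by
        have h3 : (m v - 1) * d v = m v * d v - d v := by rw [Nat.sub_mul, one_mul]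
        have h4 : d v ≤ m v * d v := Nat.le_mul_of_pos_left _ hmv
        omega
      rw [this, Nat.add_mul_div_right _ _ hdv, Nat.div_eq_of_lt (by omega), zero_add]
    rw [h1, Finset.filter_not, Finset.card_sdiff_of_subset (Finset.filter_subset _ _), h2, hdiv]
    have : (Finset.Ioc 0 (r - 1)).card = r - 1 := by simp
    rw [this]
    have := hm v hv
    have := hmr v hv
    omega
  -- the sum ∑ b v * m v equals n * r
  have hbm : ((∑ v ∈ S, b v * m v : ℕ) : ℤ) = n * r := by
    have hq' : ((∑ v ∈ S, b v * m v : ℕ) : ℚ) = n * r := by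
      push_cast
      have : ∀ v ∈ S, ((b v : ℚ) * m v) = (b v : ℚ) / d v * r := by
        intro v hv
        have hdv : (d v : ℚ) ≠ 0 := by
          exact_mod_cast (hd v hv).ne'
        rw [div_mul_eq_mul_div, eq_div_iff hdv]
        rw [mul_assoc]
        congr 1
        exact_mod_cast (hmd v hv)
      rw [Finset.sum_congr rfl this, ← Finset.sum_mul, hn]
    exact_mod_cast hq'
  -- parity
  have hkey : Even (∑ v ∈ S, (r - m v)) := by
    rcases Nat.even_or_odd r with hre | hro
    · -- r even : termwise r - m v ≡ b v * m v mod 2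
      have hterm : ∀ v ∈ S, (r - m v) % 2 = (b v * m v) % 2 := by
        intro v hv
        have h1 : Even (r - m v) ↔ Even (m v) := by
          rw [Nat.even_sub (hmr v hv)]
          simp [hre]
        have h2 : Even (b v * m v) ↔ Even (m v) := by
          constructor
          · intro h
            rcases Nat.even_mul.mp h with hb | hm'
            · -- b even ⇒ d odd ⇒ m even
              have hdo : ¬ Even (d v) := by
                intro hde
                have : 2 ∣ Nat.gcd (b v) (d v) :=
                  Nat.dvd_gcd hb.two_dvd hde.two_dvd
                rw [hcop v hv] at this
                omega
              -- m * d = r even, d odd ⇒ m even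
              have : Even (m v * d v) := (hmd v hv) ▸ hre
              rcases Nat.even_mul.mp this with h | h
              · exact h
              · exact absurd h hdo
            · exact hm'
          · intro h
            exact Nat.even_mul.mpr (Or.inr h)
        rw [Nat.even_iff, Nat.even_iff] at h1 h2
        omega
      have hsum2 : (∑ v ∈ S, (r - m v)) % 2 = (∑ v ∈ S, b v * m v) % 2 := by
        rw [Finset.sum_nat_mod, Finset.sum_congr rfl hterm, ← Finset.sum_nat_mod]
      have : Even (∑ v ∈ S, b v * m v) := by
        have : Even ((∑ v ∈ S, b v * m v : ℕ) : ℤ) := by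
          rw [hbm]
          exact (Int.even_coe_nat r).mpr hre |>.mul_left n
        exact_mod_cast this
      rw [Nat.even_iff] at this ⊢
      omega
    · -- r odd : each term even
      apply Finset.even_sum
      intro v hv
      have hmd' : m v ∣ r := ⟨d v, (hmd v hv).symm⟩
      have hmo : ¬ Even (m v) := by
        intro h
        exact (Nat.not_even_iff_odd.mpr hro) ((even_iff_two_dvd).mpr (h.two_dvd.trans hmd'))
      rw [Nat.even_sub (hmr v hv)]
      exact iff_of_false (Nat.not_even_iff_odd.mpr hro) hmo
  -- now the product manipulation
  have hfac : ∀ v ∈ S,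
      ∏ i ∈ (Finset.Icc 1 (r - 1)).filter (fun i => ¬ d v ∣ i), (1 - q v ^ i)
        = (-1 : ℤ) ^ (r - m v) *
          ∏ i ∈ (Finset.Icc 1 (r - 1)).filter (fun i => ¬ d v ∣ i), (q v ^ i - 1) := by
    intro v hv
    rw [← hcard v hv, ← Finset.prod_const, ← Finset.prod_mul_distrib]
    exact Finset.prod_congr rfl fun i _ => by ring
  rw [Finset.prod_congr rfl hfac, Finset.prod_mul_distrib,
    Finset.prod_pow_eq_pow_sum, hkey.neg_one_pow, one_mul]
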